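/- Let g be a 4×4 real symmetric matrix with exactly one negative and three positive eigenvalues, let V ∈ ℝ⁴, set V² := Vᵀ g V, and define the 4×4 real symmetric matrix N := (1 − V²)·g + (gV)·(gV)ᵀ. Then: if V² < 1, N has exactly one negative and three positive eigenvalues; if V² > 1, N has exactly two negative and two positive eigenvalues; if V² = 1, det N = 0. In particular N is never positive definite and never negative definite. -/

import Mathlib

open Matrix

namespace Stmt19Aux

variable {n : Type*} [Fintype n] [DecidableEq n] {A : Matrix n n ℝ}

/-- coordinates of `x` in the eigenbasis of `A`. -/
noncomputable def coords (hA : A.IsHermitian) (x : n → ℝ) : n → ℝ :=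
  (star (hA.eigenvectorUnitary : Matrix n n ℝ)) *ᵥ x

lemma coords_eq_vecMul (hA : A.IsHermitian) (x : n → ℝ) :
    Matrix.vecMul x (hA.eigenvectorUnitary : Matrix n n ℝ) = coords hA x := by
  ext i
  simp [coords, Matrix.vecMul, Matrix.mulVec, dotProduct, Matrix.star_apply, mul_comm]

lemma quad_eq_sum (hA : A.IsHermitian) (x : n → ℝ) :
    x ⬝ᵥ A *ᵥ x = ∑ i, hA.eigenvalues i * (coords hA x i) ^ 2 := by
  conv_lhs => rw [hA.spectral_theorem, Unitary.conjStarAlgAut_apply, ← Matrix.mulVec_mulVec, ← Matrix.mulVec_mulVec,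
    Matrix.dotProduct_mulVec, coords_eq_vecMul hA]
  show (coords hA x) ⬝ᵥ (Matrix.diagonal (RCLike.ofReal ∘ hA.eigenvalues) *ᵥ coords hA x) = _
  simp only [dotProduct, Matrix.mulVec_diagonal, Function.comp_apply,
    RCLike.ofReal_real_eq_id, id_eq]
  refine Finset.sum_congr rfl fun i _ => by ring

lemma eq_zero_of_coords_eq_zero (hA : A.IsHermitian) {x : n → ℝ}
    (h : coords hA x = 0) : x = 0 := by
  have hU : (hA.eigenvectorUnitary : Matrix n n ℝ) *
      star (hA.eigenvectorUnitary : Matrix n n ℝ) = 1 :=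
    (Matrix.mem_unitaryGroup_iff).mp hA.eigenvectorUnitary.2
  have : (hA.eigenvectorUnitary : Matrix n n ℝ) *ᵥ coords hA x = x := by
    rw [coords, Matrix.mulVec_mulVec, hU, Matrix.one_mulVec]
  rw [h, Matrix.mulVec_zero] at this
  exact this.symm

lemma finrank_le_ncard (hA : A.IsHermitian) (T : Set n) (S : Submodule ℝ (n → ℝ))
    (h : ∀ x ∈ S, (∀ i ∈ T, coords hA x i = 0) → x = 0) :
    Module.finrank ℝ S ≤ T.ncard := by
  classical
  haveI : Fintype T := (Set.toFinite T).fintype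
  set L : (n → ℝ) →ₗ[ℝ] (T → ℝ) :=
    (LinearMap.funLeft ℝ ℝ (Subtype.val : T → n)).comp
      (Matrix.mulVecLin (star (hA.eigenvectorUnitary : Matrix n n ℝ))) with hL
  have hinj : Function.Injective (L.comp S.subtype) := by
    rw [← LinearMap.ker_eq_bot, LinearMap.ker_eq_bot']
    rintro ⟨x, hx⟩ hLx
    have : x = 0 := by
      refine h x hx fun i hi => ?_
      exact congrFun hLx ⟨i, hi⟩
    exact Subtype.ext this
  calc Module.finrank ℝ S ≤ Module.finrank ℝ (T → ℝ) :=
        LinearMap.finrank_le_finrank_of_injective hinj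
    _ = Fintype.card T := Module.finrank_pi ℝ
    _ = T.ncard := by rw [← Nat.card_coe_set_eq, Nat.card_eq_fintype_card]

lemma finrank_le_ncard_pos (hA : A.IsHermitian) (S : Submodule ℝ (n → ℝ))
    (hS : ∀ x ∈ S, x ≠ 0 → 0 < x ⬝ᵥ A *ᵥ x) :
    Module.finrank ℝ S ≤ {i | 0 < hA.eigenvalues i}.ncard := by
  refine finrank_le_ncard hA _ S fun x hx hcz => ?_
  by_contra hx0
  have hq := hS x hx hx0
  have hle : x ⬝ᵥ A *ᵥ x ≤ 0 := by
    rw [quad_eq_sum hA]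
    refine Finset.sum_nonpos fun i _ => ?_
    by_cases hi : 0 < hA.eigenvalues i
    · rw [hcz i hi]; simp
    · exact mul_nonpos_of_nonpos_of_nonneg (le_of_not_gt hi) (sq_nonneg _)
  linarith

lemma finrank_le_ncard_neg (hA : A.IsHermitian) (S : Submodule ℝ (n → ℝ))
    (hS : ∀ x ∈ S, x ≠ 0 → x ⬝ᵥ A *ᵥ x < 0) :
    Module.finrank ℝ S ≤ {i | hA.eigenvalues i < 0}.ncard := by
  refine finrank_le_ncard hA _ S fun x hx hcz => ?_
  by_contra hx0
  have hq := hS x hx hx0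
  have hle : 0 ≤ x ⬝ᵥ A *ᵥ x := by
    rw [quad_eq_sum hA]
    refine Finset.sum_nonneg fun i _ => ?_
    by_cases hi : hA.eigenvalues i < 0
    · rw [hcz i hi]; simp
    · exact mul_nonneg (le_of_not_gt hi) (sq_nonneg _)
  linarith

/-- the dot-product linear functional -/
def dotL (w : n → ℝ) : (n → ℝ) →ₗ[ℝ] ℝ where
  toFun x := w ⬝ᵥ x
  map_add' a b := dotProduct_add w a b
  map_smul' c a := by simp [dotProduct_smul]

@[simp] lemma dotL_apply (w x : n → ℝ) : dotL w x = w ⬝ᵥ x := rfl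

end Stmt19Aux

open Stmt19Aux

set_option maxHeartbeats 2000000 in
/-- Let g be a 4×4 real symmetric matrix with exactly one negative and three positive
eigenvalues, V ∈ ℝ⁴, V² := Vᵀ g V and N := (1 − V²)·g + (gV)·(gV)ᵀ. Then N has signature
(1,3) if V² < 1, signature (2,2) if V² > 1, det N = 0 if V² = 1, and N is never positive
definite nor negative definite. -/
theorem stmt_19 (g : Matrix (Fin 4) (Fin 4) ℝ) (hg : g.IsHermitian)
    (hneg : {i | hg.eigenvalues i < 0}.ncard = 1)
    (hpos : {i | 0 < hg.eigenvalues i}.ncard = 3)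
    (V : Fin 4 → ℝ) (V2 : ℝ) (hV2 : V2 = V ⬝ᵥ g.mulVec V)
    (N : Matrix (Fin 4) (Fin 4) ℝ)
    (hN : N = (1 - V2) • g + vecMulVec (g.mulVec V) (g.mulVec V)) :
    (∀ hNh : N.IsHermitian,
      (V2 < 1 →
        {i | hNh.eigenvalues i < 0}.ncard = 1 ∧ {i | 0 < hNh.eigenvalues i}.ncard = 3) ∧
      (1 < V2 →
        {i | hNh.eigenvalues i < 0}.ncard = 2 ∧ {i | 0 < hNh.eigenvalues i}.ncard = 2)) ∧
    (V2 = 1 → N.det = 0) ∧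
    ¬ N.PosDef ∧ ¬ (-N).PosDef := by
  classical
  set w : Fin 4 → ℝ := g *ᵥ V with hw
  -- symmetry of g as transpose
  have hsym : ∀ i j, g i j = g j i := by
    intro i j
    conv_lhs => rw [← hg]
    simp [Matrix.conjTranspose_apply]
  have hgt : gᵀ = g := by
    ext i j
    simp [Matrix.transpose_apply, hsym i j]
  have hwV : w ⬝ᵥ V = V2 := by rw [hV2]; exact dotProduct_comm w V
  have hVg : ∀ x, V ⬝ᵥ g *ᵥ x = w ⬝ᵥ x := by
    intro x
    rw [Matrix.dotProduct_mulVec, ← hgt, Matrix.vecMul_transpose]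
  -- N action on vectors
  have hvvmul : ∀ x, vecMulVec w w *ᵥ x = (w ⬝ᵥ x) • w := by
    intro x
    ext i
    show ∑ j, (w i * w j) * x j = (∑ j, w j * x j) * w i
    rw [Finset.sum_mul]
    exact Finset.sum_congr rfl fun j _ => by ring
  have hNv : ∀ x, N *ᵥ x = (1 - V2) • (g *ᵥ x) + (w ⬝ᵥ x) • w := by
    intro x
    rw [hN, Matrix.add_mulVec, Matrix.smul_mulVec, hvvmul]
  have hqN : ∀ x, x ⬝ᵥ N *ᵥ x = (1 - V2) * (x ⬝ᵥ g *ᵥ x) + (w ⬝ᵥ x) ^ 2 := by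
    intro x
    rw [hNv x, dotProduct_add, dotProduct_smul, dotProduct_smul,
      smul_eq_mul, smul_eq_mul, dotProduct_comm x w]
    ring
  -- eigen data for g
  set lam := hg.eigenvalues with hlam
  set ug : Fin 4 → (Fin 4 → ℝ) := fun i => ⇑(hg.eigenvectorBasis i) with hug
  have hcu : ∀ i, coords hg (ug i) = Pi.single i 1 := fun i =>
    hg.star_eigenvectorUnitary_mulVec i
  have hUU : star (hg.eigenvectorUnitary : Matrix (Fin 4) (Fin 4) ℝ) *
      (hg.eigenvectorUnitary : Matrix (Fin 4) (Fin 4) ℝ) = 1 :=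
    (Matrix.mem_unitaryGroup_iff').mp hg.eigenvectorUnitary.2
  have hortho : ∀ i j, ug i ⬝ᵥ ug j = if i = j then 1 else 0 := by
    intro i j
    have h1 : ug i ⬝ᵥ ug j = (star (hg.eigenvectorUnitary : Matrix (Fin 4) (Fin 4) ℝ) *
        (hg.eigenvectorUnitary : Matrix (Fin 4) (Fin 4) ℝ)) i j := by
      simp [Matrix.mul_apply, dotProduct, Matrix.star_apply, hug]
    rw [h1, hUU, Matrix.one_apply]
  have hqug : ∀ i, ug i ⬝ᵥ g *ᵥ ug i = lam i := by
    intro i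
    have : g *ᵥ ug i = lam i • ug i := hg.mulVec_eigenvectorBasis i
    rw [this, dotProduct_smul, smul_eq_mul, hortho i i]
    simp
  -- the negative eigendirection of g
  obtain ⟨i0, hi0set⟩ := Set.ncard_eq_one.mp hneg
  have hi0 : lam i0 < 0 := by
    have : i0 ∈ {i | hg.eigenvalues i < 0} := by rw [hi0set]; exact rfl
    exact this
  set e : Fin 4 → ℝ := ug i0 with he
  set s : ℝ := w ⬝ᵥ e with hs
  have hqe : e ⬝ᵥ g *ᵥ e = lam i0 := hqug i0
  have hegV : e ⬝ᵥ g *ᵥ V = s := by rw [hs, hw]; exact dotProduct_comm e (g *ᵥ V)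
  have hVge : V ⬝ᵥ g *ᵥ e = s := by rw [hVg e, hs]
  -- quadratic values on e - t • V
  have hq_et : ∀ t : ℝ, (e - t • V) ⬝ᵥ g *ᵥ (e - t • V)
      = lam i0 - 2 * t * s + t ^ 2 * V2 := by
    intro t
    rw [Matrix.mulVec_sub, Matrix.mulVec_smul]
    rw [sub_dotProduct, dotProduct_sub, dotProduct_sub, smul_dotProduct,
      dotProduct_smul, dotProduct_smul, smul_dotProduct]
    rw [hqe, hegV, hVge]
    rw [← hV2]
    simp only [smul_eq_mul]
    ring
  have hw_et : ∀ t : ℝ, w ⬝ᵥ (e - t • V) = s - t * V2 := by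
    intro t
    rw [dotProduct_sub, dotProduct_smul, hwV, ← hs, smul_eq_mul]
  -- positive eigenspace of g
  set Tp : Set (Fin 4) := {i | 0 < hg.eigenvalues i} with hTp
  haveI : Fintype Tp := (Set.toFinite Tp).fintype
  set b : Tp → (Fin 4 → ℝ) := fun i => ug ↑i with hb
  have hbLI : LinearIndependent ℝ b := by
    rw [Fintype.linearIndependent_iff]
    intro c hc j0
    have h := congrArg (dotL (b j0)) hc
    rw [map_sum, map_zero] at h
    have hdelta : ∀ i : Tp, dotL (b j0) (b i) = if j0 = i then 1 else 0 := by
      intro i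
      show ug ↑j0 ⬝ᵥ ug ↑i = _
      rw [hortho]
      simp [Subtype.ext_iff]
    have hsum_eq : ∑ x : Tp, (dotL (b j0)) (c x • b x)
        = ∑ i : Tp, c i * (if j0 = i then 1 else 0) :=
      Finset.sum_congr rfl fun i _ => by rw [_root_.map_smul, smul_eq_mul, hdelta i]
    rw [hsum_eq] at h
    simpa [mul_ite, Finset.sum_ite_eq] using h
  set P : Submodule ℝ (Fin 4 → ℝ) := Submodule.span ℝ (Set.range b) with hP
  have hfinP : Module.finrank ℝ P = 3 := by
    rw [hP, finrank_span_eq_card hbLI, ← Nat.card_eq_fintype_card,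
      Nat.card_coe_set_eq, hpos]
  have hPco : ∀ x ∈ P, ∀ j, ¬(0 < hg.eigenvalues j) → coords hg x j = 0 := by
    intro x hx
    refine Submodule.span_induction (p := fun x _ => ∀ j, ¬(0 < hg.eigenvalues j) →
        coords hg x j = 0) ?_ ?_ ?_ ?_ hx
    · rintro x ⟨i, rfl⟩ j hj
      rw [hcu]
      refine Pi.single_eq_of_ne ?_ 1
      intro hji
      exact hj (hji ▸ i.2)
    · intro j _; simp [coords, Matrix.mulVec_zero]
    · intro x y _ _ hx hy j hj
      have : coords hg (x + y) = coords hg x + coords hg y := Matrix.mulVec_add _ _ _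
      rw [this, Pi.add_apply, hx j hj, hy j hj, add_zero]
    · intro a x _ hx j hj
      have : coords hg (a • x) = a • coords hg x := Matrix.mulVec_smul _ a x
      rw [this, Pi.smul_apply, hx j hj, smul_zero]
  have hPpos : ∀ x ∈ P, x ≠ 0 → 0 < x ⬝ᵥ g *ᵥ x := by
    intro x hx hx0
    rw [quad_eq_sum hg x]
    have hex : ∃ j, coords hg x j ≠ 0 := by
      by_contra hno
      push_neg at hno
      exact hx0 (eq_zero_of_coords_eq_zero hg (funext hno))
    obtain ⟨j, hj⟩ := hex
    have hjTp : 0 < hg.eigenvalues j := by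
      by_contra hjn
      exact hj (hPco x hx j hjn)
    refine Finset.sum_pos' (fun i _ => ?_) ⟨j, Finset.mem_univ j, ?_⟩
    · by_cases hi : 0 < hg.eigenvalues i
      · exact mul_nonneg hi.le (sq_nonneg _)
      · rw [hPco x hx i hi]; simp
    · have : 0 < (coords hg x j) ^ 2 := by positivity
      exact mul_pos hjTp this
  -- g is nondegenerate
  have hallg : ∀ i, hg.eigenvalues i ≠ 0 := by
    have hdisj : Disjoint {i | hg.eigenvalues i < 0} {i | 0 < hg.eigenvalues i} :=
      Set.disjoint_left.mpr fun i h1 h2 => by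
        simp only [Set.mem_setOf_eq] at h1 h2
        exact lt_asymm h1 h2
    have hcard : ({i | hg.eigenvalues i < 0} ∪ {i | 0 < hg.eigenvalues i}).ncard = 4 := by
      rw [Set.ncard_union_eq hdisj (Set.toFinite _) (Set.toFinite _), hneg, hpos]
    have hun : {i | hg.eigenvalues i < 0} ∪ {i | 0 < hg.eigenvalues i} = Set.univ := by
      refine Set.eq_of_subset_of_ncard_le (Set.subset_univ _) ?_ (Set.toFinite _)
      rw [Set.ncard_univ, hcard]
      simp [Nat.card_eq_fintype_card]
    intro i hi
    have hmem : i ∈ {i | hg.eigenvalues i < 0} ∪ {i | 0 < hg.eigenvalues i} := by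
      rw [hun]; trivial
    simp only [Set.mem_union, Set.mem_setOf_eq] at hmem
    rcases hmem with h | h
    · exact absurd hi (ne_of_lt h)
    · exact absurd hi (ne_of_gt h)
  have hdetg : g.det ≠ 0 := by
    rw [hg.det_eq_prod_eigenvalues]
    rw [Finset.prod_ne_zero_iff]
    intro i _
    simpa using hallg i
  -- determinant of N
  have hNfac : N = g * ((1 - V2) • (1 : Matrix (Fin 4) (Fin 4) ℝ) + vecMulVec V w) := by
    rw [hN, Matrix.mul_add]
    congr 1
    · rw [Matrix.mul_smul, Matrix.mul_one]
    · ext i j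
      show (g *ᵥ V) i * w j = (g * vecMulVec V w) i j
      rw [Matrix.mul_apply]
      show (∑ k, g i k * V k) * w j = ∑ k, g i k * (V k * w j)
      rw [Finset.sum_mul]
      exact Finset.sum_congr rfl fun k _ => by ring
  have hdetNne : V2 ≠ 1 → N.det ≠ 0 := by
    intro hne
    have ha : (1 - V2) ≠ 0 := sub_ne_zero.mpr (Ne.symm hne)
    have hM : ((1 - V2) • (1 : Matrix (Fin 4) (Fin 4) ℝ) + vecMulVec V w).det
        = (1 - V2) ^ 3 := by
      have h2 : (1 - V2) • (1 : Matrix (Fin 4) (Fin 4) ℝ) + vecMulVec V w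
          = (1 - V2) • ((1 : Matrix (Fin 4) (Fin 4) ℝ) +
              Matrix.replicateCol (Fin 1) ((1 - V2)⁻¹ • V) * Matrix.replicateRow (Fin 1) w) := by
        rw [smul_add, Matrix.vecMulVec_eq (Fin 1) V w, Matrix.replicateCol_smul, Matrix.smul_mul,
          smul_smul, mul_inv_cancel₀ ha, one_smul]
        rfl
      rw [h2, Matrix.det_smul]
      erw [Matrix.det_one_add_replicateCol_mul_replicateRow (ι := Fin 1)]
      rw [dotProduct_smul, hwV]
      simp only [Fintype.card_fin, smul_eq_mul]
      field_simp
      ring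
    rw [hNfac, Matrix.det_mul, hM]
    exact mul_ne_zero hdetg (pow_ne_zero _ ha)
  have hdet1 : V2 = 1 → N.det = 0 := by
    intro h1
    have hNw : N = vecMulVec w w := by rw [hN, h1]; simp [hw]
    have key : ∀ v, w ⬝ᵥ v = 0 → N *ᵥ v = 0 := by
      intro v hv
      rw [hNw]
      have := hvvmul v
      rw [hv, zero_smul] at this
      exact this
    apply (Matrix.exists_mulVec_eq_zero_iff).mp
    by_cases h01 : w 0 = 0
    · exact ⟨Pi.single 0 1, by
        intro h0
        have := congrFun h0 0
        simp at this, key _ (by rw [dotProduct_single]; simp [h01])⟩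
    · refine ⟨![w 1, -(w 0), 0, 0], ?_, key _ ?_⟩
      · intro h0
        have := congrFun h0 1
        simp at this
        exact h01 this
      · show w ⬝ᵥ _ = 0
        simp [dotProduct, Fin.sum_univ_four]
        ring
  -- eigenvalue counting helper for N
  have hcount : ∀ (hNh : N.IsHermitian), N.det ≠ 0 →
      {i | hNh.eigenvalues i < 0}.ncard + {i | 0 < hNh.eigenvalues i}.ncard = 4 := by
    intro hNh hdet
    have hall : ∀ i, hNh.eigenvalues i ≠ 0 := by
      intro i hi
      apply hdet
      rw [hNh.det_eq_prod_eigenvalues]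
      refine Finset.prod_eq_zero (Finset.mem_univ i) ?_
      simp [hi]
    have hdisj : Disjoint {i | hNh.eigenvalues i < 0} {i | 0 < hNh.eigenvalues i} :=
      Set.disjoint_left.mpr fun i h1 h2 => by
        simp only [Set.mem_setOf_eq] at h1 h2
        exact lt_asymm h1 h2
    have hun : {i | hNh.eigenvalues i < 0} ∪ {i | 0 < hNh.eigenvalues i} = Set.univ := by
      ext i
      simp only [Set.mem_union, Set.mem_setOf_eq, Set.mem_univ, iff_true]
      exact (hall i).lt_or_gt
    have h4 := Set.ncard_union_eq hdisj (Set.toFinite _) (Set.toFinite _)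
    rw [hun, Set.ncard_univ] at h4
    simp only [Nat.card_eq_fintype_card, Fintype.card_fin] at h4
    omega
  -- a positive direction for N (all cases)
  have hposvec : ∃ x, 0 < x ⬝ᵥ N *ᵥ x := by
    rcases le_or_gt V2 0 with h | h
    · have hTpne : Tp.Nonempty := Set.nonempty_of_ncard_ne_zero (by rw [hpos]; norm_num)
      obtain ⟨i1, hi1⟩ := hTpne
      refine ⟨ug i1, ?_⟩
      rw [hqN, hqug]
      have hl1 : 0 < lam i1 := hi1
      nlinarith [sq_nonneg (w ⬝ᵥ ug i1)]
    · refine ⟨V, ?_⟩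
      rw [hqN, ← hV2, hwV]
      nlinarith
  -- a negative direction for N when V2 < 1
  have hnegvec : V2 < 1 → ∃ x, x ⬝ᵥ N *ᵥ x < 0 := by
    intro hv
    rcases lt_trichotomy V2 0 with h | h | h
    · refine ⟨V, ?_⟩
      rw [hqN, ← hV2, hwV]
      nlinarith
    · refine ⟨e - (s / 2) • V, ?_⟩
      rw [hqN, hq_et, hw_et, h]
      ring_nf
      nlinarith [hi0]
    · refine ⟨e - (s / V2) • V, ?_⟩
      have hne : V2 ≠ 0 := ne_of_gt h
      have hval : (e - (s / V2) • V) ⬝ᵥ N *ᵥ (e - (s / V2) • V)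
          = (1 - V2) * (lam i0 - s ^ 2 / V2) := by
        rw [hqN, hq_et, hw_et]
        field_simp
        ring
      rw [hval]
      have h1 : 0 < 1 - V2 := by linarith
      have h2 : lam i0 - s ^ 2 / V2 < 0 := by
        have : 0 ≤ s ^ 2 / V2 := div_nonneg (sq_nonneg s) h.le
        linarith
      exact mul_neg_of_pos_of_neg h1 h2
  -- negative subspace P ⊓ ker(w ⬝ᵥ ·) for V2 > 1
  set K : Submodule ℝ (Fin 4 → ℝ) := LinearMap.ker (dotL w) with hK
  have htot : Module.finrank ℝ (Fin 4 → ℝ) = 4 := by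
    simp [Module.finrank_pi]
  have hKrank : 3 ≤ Module.finrank ℝ K := by
    have h1 := LinearMap.finrank_range_add_finrank_ker (dotL w)
    have h2 : Module.finrank ℝ (LinearMap.range (dotL w)) ≤ 1 := by
      have := Submodule.finrank_le (LinearMap.range (dotL w))
      simpa using this
    rw [htot, ← hK] at h1
    omega
  have hPK : 2 ≤ Module.finrank ℝ ↥(P ⊓ K) := by
    have h1 := Submodule.finrank_sup_add_finrank_inf_eq P K
    have h2 : Module.finrank ℝ ↥(P ⊔ K) ≤ 4 := by
      have := Submodule.finrank_le (P ⊔ K)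
      rwa [htot] at this
    omega
  have hS1neg : 1 < V2 → ∀ x ∈ P ⊓ K, x ≠ 0 → x ⬝ᵥ N *ᵥ x < 0 := by
    intro hv x hx hx0
    obtain ⟨hxP, hxK⟩ := hx
    have hwx : w ⬝ᵥ x = 0 := hxK
    rw [hqN, hwx]
    have := hPpos x hxP hx0
    nlinarith
  -- negative direction for N when V2 > 1
  have hnegvec' : 1 < V2 → ∃ x, x ⬝ᵥ N *ᵥ x < 0 := by
    intro hv
    have hne : P ⊓ K ≠ ⊥ := by
      intro hbot
      rw [hbot] at hPK
      simp [finrank_bot] at hPK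
    obtain ⟨x, hxmem, hx0⟩ := Submodule.ne_bot_iff _ |>.mp hne
    exact ⟨x, hS1neg hv x hxmem hx0⟩
  constructor
  · -- the eigenvalue count claims
    intro hNh
    constructor
    · -- V2 < 1 : signature (1,3)
      intro hv
      have hsum := hcount hNh (hdetNne (ne_of_lt hv))
      -- lower bound 3 on positives via P
      have hp3 : 3 ≤ {i | 0 < hNh.eigenvalues i}.ncard := by
        have hle := finrank_le_ncard_pos hNh P ?_
        · omega
        · intro x hx hx0
          rw [hqN]
          have := hPpos x hx hx0
          nlinarith [sq_nonneg (w ⬝ᵥ x)]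
      -- lower bound 1 on negatives
      obtain ⟨x0, hx0q⟩ := hnegvec hv
      have hx00 : x0 ≠ 0 := by
        intro h0
        rw [h0] at hx0q
        simp at hx0q
      have hn1 : 1 ≤ {i | hNh.eigenvalues i < 0}.ncard := by
        have hle := finrank_le_ncard_neg hNh (Submodule.span ℝ {x0}) ?_
        · rwa [finrank_span_singleton hx00] at hle
        · intro y hy hy0
          obtain ⟨c, rfl⟩ := Submodule.mem_span_singleton.mp hy
          have hc : c ≠ 0 := by
            intro h0
            rw [h0, zero_smul] at hy0
            exact hy0 rfl
          have hval : (c • x0) ⬝ᵥ N *ᵥ (c • x0) = c ^ 2 * (x0 ⬝ᵥ N *ᵥ x0) := by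
            rw [Matrix.mulVec_smul, smul_dotProduct, dotProduct_smul,
              smul_eq_mul, smul_eq_mul]
            ring
          rw [hval]
          have : 0 < c ^ 2 := by positivity
          exact mul_neg_of_pos_of_neg this hx0q
      omega
    · -- V2 > 1 : signature (2,2)
      intro hv
      have hsum := hcount hNh (hdetNne (ne_of_gt hv))
      have hVpos : 0 < V2 := by linarith
      have hVne : V2 ≠ 0 := ne_of_gt hVpos
      -- the auxiliary vector z
      set z : Fin 4 → ℝ := e - (s / V2) • V with hz
      have hwz : w ⬝ᵥ z = 0 := by
        rw [hz, hw_et]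
        field_simp
        ring
      have hqz : z ⬝ᵥ g *ᵥ z = lam i0 - s ^ 2 / V2 := by
        rw [hz, hq_et]
        field_simp
        ring
      have hqzneg : z ⬝ᵥ g *ᵥ z < 0 := by
        rw [hqz]
        have : 0 ≤ s ^ 2 / V2 := div_nonneg (sq_nonneg s) hVpos.le
        linarith
      have hz0 : z ≠ 0 := by
        intro h0
        rw [h0] at hqzneg
        simp at hqzneg
      -- negatives ≥ 2 via P ⊓ K
      have hn2 : 2 ≤ {i | hNh.eigenvalues i < 0}.ncard := by
        have hle := finrank_le_ncard_neg hNh (P ⊓ K) (hS1neg hv)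
        omega
      -- positives ≥ 2 via span {V, z}
      have hLI2 : LinearIndependent ℝ ![V, z] := by
        rw [linearIndependent_fin2]
        simp only [Matrix.cons_val_zero, Matrix.cons_val_one, Matrix.head_cons]
        refine ⟨hz0, fun a hVa => ?_⟩
        have hcontr : w ⬝ᵥ V = a * (w ⬝ᵥ z) := by
          rw [← hVa, dotProduct_smul, smul_eq_mul]
        rw [hwV, hwz, mul_zero] at hcontr
        linarith
      have hp2 : 2 ≤ {i | 0 < hNh.eigenvalues i}.ncard := by
        have hle := finrank_le_ncard_pos hNh (Submodule.span ℝ (Set.range ![V, z])) ?_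
        · rw [finrank_span_eq_card hLI2] at hle
          simpa using hle
        · intro x hx hx0
          obtain ⟨c, hc⟩ := (Submodule.mem_span_range_iff_exists_fun ℝ).mp hx
          rw [Fin.sum_univ_two] at hc
          simp only [Matrix.cons_val_zero, Matrix.cons_val_one, Matrix.head_cons] at hc
          -- x = c 0 • V + c 1 • z
          have hwx : w ⬝ᵥ x = c 0 * V2 := by
            rw [← hc, dotProduct_add, dotProduct_smul, dotProduct_smul,
              hwV, hwz, smul_eq_mul, smul_eq_mul]
            ring
          have hgx : x ⬝ᵥ g *ᵥ x = c 0 ^ 2 * V2 + c 1 ^ 2 * (z ⬝ᵥ g *ᵥ z) := by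
            rw [← hc]
            rw [Matrix.mulVec_add, Matrix.mulVec_smul, Matrix.mulVec_smul]
            rw [dotProduct_add, add_dotProduct, add_dotProduct,
              smul_dotProduct, smul_dotProduct, smul_dotProduct,
              smul_dotProduct, dotProduct_smul, dotProduct_smul,
              dotProduct_smul, dotProduct_smul]
            have h1 : V ⬝ᵥ g *ᵥ V = V2 := hV2.symm
            have h2 : V ⬝ᵥ g *ᵥ z = 0 := by rw [hVg z, hwz]
            have h3 : z ⬝ᵥ g *ᵥ V = 0 := by
              rw [← hw, dotProduct_comm]; exact hwz
            rw [h1, h2, h3]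
            simp only [smul_eq_mul]
            ring
          have hqx : x ⬝ᵥ N *ᵥ x = c 0 ^ 2 * V2 + c 1 ^ 2 * ((1 - V2) * (z ⬝ᵥ g *ᵥ z)) := by
            rw [hqN, hgx, hwx]
            ring
          have hcne : c 0 ≠ 0 ∨ c 1 ≠ 0 := by
            by_contra hno
            push_neg at hno
            rw [hno.1, hno.2, zero_smul, zero_smul, add_zero] at hc
            exact hx0 hc.symm
          have hB : 0 < (1 - V2) * (z ⬝ᵥ g *ᵥ z) :=
            mul_pos_of_neg_of_neg (by linarith) hqzneg
          rw [hqx]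
          rcases hcne with h | h
          · have hc0 : 0 < c 0 ^ 2 := by positivity
            nlinarith [sq_nonneg (c 1)]
          · have hc1 : 0 < c 1 ^ 2 := by positivity
            nlinarith [sq_nonneg (c 0)]
      omega
  refine ⟨hdet1, ?_, ?_⟩
  · -- not positive definite
    intro hPD
    rcases lt_trichotomy V2 1 with hv | hv | hv
    · obtain ⟨x0, hx0q⟩ := hnegvec hv
      have hx00 : x0 ≠ 0 := by
        intro h0; rw [h0] at hx0q; simp at hx0q
      have := (posDef_iff_dotProduct_mulVec.mp hPD).2 hx00
      rw [show star x0 = x0 from funext fun i => rfl] at this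
      linarith
    · have := hPD.det_pos
      rw [hdet1 hv] at this
      exact lt_irrefl 0 this
    · obtain ⟨x0, hx0q⟩ := hnegvec' hv
      have hx00 : x0 ≠ 0 := by
        intro h0; rw [h0] at hx0q; simp at hx0q
      have := (posDef_iff_dotProduct_mulVec.mp hPD).2 hx00
      rw [show star x0 = x0 from funext fun i => rfl] at this
      linarith
  · -- not negative definite
    intro hPD
    obtain ⟨x0, hx0q⟩ := hposvec
    have hx00 : x0 ≠ 0 := by
      intro h0; rw [h0] at hx0q; simp at hx0q
    have := (posDef_iff_dotProduct_mulVec.mp hPD).2 hx00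
    rw [show star x0 = x0 from funext fun i => rfl] at this
    rw [Matrix.neg_mulVec, dotProduct_neg] at this
    linarith
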